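/- Let N ≥ 0 and let b_0, ..., b_N > 0. Define P(b_0,...,b_N) = Σ_{l=0}^{N} b_l exp(-Σ_{j=0}^{l} b_j). If the b_j satisfy the stationarity conditions Σ_{l=m}^{N} b_l exp(-Σ_{j=m+1}^{l} b_j) = 1 for all 0 ≤ m ≤ N, then b_N = 1, b_m = 1 - exp(-b_{m+1}) for 0 ≤ m ≤ N-1, and P(b_0,...,b_N) = exp(-b_0). -/

import Mathlib

lemma icc_insert (a l : ℕ) (h : a ≤ l) :
    Finset.Icc a l = insert a (Finset.Icc (a + 1) l) := by
  ext x; simp [Finset.mem_Icc]; omega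

lemma factor_sum (b : ℕ → ℝ) (a N : ℕ) :
    ∑ l ∈ Finset.Icc (a + 1) N, b l * Real.exp (-(∑ j ∈ Finset.Icc (a + 1) l, b j))
      = Real.exp (-b (a + 1)) *
        ∑ l ∈ Finset.Icc (a + 1) N, b l * Real.exp (-(∑ j ∈ Finset.Icc (a + 2) l, b j)) := by
  rw [Finset.mul_sum]
  apply Finset.sum_congr rfl
  intro l hl
  rw [Finset.mem_Icc] at hl
  rw [icc_insert (a + 1) l hl.1, Finset.sum_insert (by simp)]
  rw [neg_add, Real.exp_add]
  ring

theorem stmt8 (N : ℕ) (b : ℕ → ℝ) (hb : ∀ j, 0 < b j)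
    (hstat : ∀ m ≤ N, ∑ l ∈ Finset.Icc m N,
        b l * Real.exp (-(∑ j ∈ Finset.Icc (m + 1) l, b j)) = 1) :
    b N = 1 ∧ (∀ m < N, b m = 1 - Real.exp (-b (m + 1))) ∧
      ∑ l ∈ Finset.range (N + 1),
          b l * Real.exp (-(∑ j ∈ Finset.range (l + 1), b j)) = Real.exp (-b 0) := by
  have hbN : b N = 1 := by
    have h := hstat N le_rfl
    rw [Finset.Icc_self, Finset.sum_singleton,
      Finset.Icc_eq_empty (by omega), Finset.sum_empty, neg_zero, Real.exp_zero, mul_one] at h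
    exact h
  refine ⟨hbN, ?_, ?_⟩
  · intro m hm
    have h := hstat m (le_of_lt hm)
    rw [icc_insert m N (le_of_lt hm), Finset.sum_insert (by simp),
      Finset.Icc_eq_empty (by omega), Finset.sum_empty, neg_zero, Real.exp_zero, mul_one,
      factor_sum b m N, hstat (m + 1) hm, mul_one] at h
    linarith
  · have h := hstat 0 (Nat.zero_le N)
    have hset : Finset.range (N + 1) = Finset.Icc 0 N := by
      ext x; simp [Finset.mem_Icc]
    rw [hset]
    have : ∀ l ∈ Finset.Icc 0 N,
        b l * Real.exp (-(∑ j ∈ Finset.range (l + 1), b j))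
          = Real.exp (-b 0) * (b l * Real.exp (-(∑ j ∈ Finset.Icc 1 l, b j))) := by
      intro l hl
      have hset2 : Finset.range (l + 1) = Finset.Icc 0 l := by
        ext x; simp [Finset.mem_Icc]
      rw [hset2, icc_insert 0 l (Nat.zero_le l), Finset.sum_insert (by simp),
        neg_add, Real.exp_add]
      ring
    rw [Finset.sum_congr rfl this, ← Finset.mul_sum, h, mul_one]
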